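/- Let A = Z/ℓ^{α₁} ⊕ ⋯ ⊕ Z/ℓ^{α_r} with α₁ ≥ ⋯ ≥ α_r > 0, viewed as a module over Z/ℓ^{α₁}. Then the number of alternating bilinear forms on A (as a Z/ℓ^{α₁}-module) equals ℓ^{Σ_{i=2}^r (i-1)α_i}. -/

import Mathlib

namespace CardAltFormsAux

lemma nsmul_congr {T : Type*} [AddCommMonoid T] {n : ℕ} {c : T} (h : n • c = 0)
    {k k' : ℕ} (hk : k % n = k' % n) : k • c = k' • c := by
  have e : ∀ m : ℕ, m • c = (m % n) • c := by
    intro m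
    conv_lhs => rw [← Nat.div_add_mod m n]
    rw [add_nsmul]
    have h2 : (n * (m / n)) • c = (m / n) • (n • c) := by rw [smul_smul, mul_comm]
    rw [h2, h, smul_zero, zero_add]
  rw [e k, e k', hk]

lemma val_add_smul {T : Type*} [AddCommMonoid T] {n : ℕ} [NeZero n] (a b : ZMod n)
    (w : ℕ) {c : T} (h : n • c = 0) :
    ((a + b).val * w) • c = (a.val * w) • c + (b.val * w) • c := by
  rw [← add_nsmul, ← add_mul]
  refine nsmul_congr h (Nat.ModEq.mul_right w ?_)
  show (a + b).val % n = (a.val + b.val) % n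
  rw [ZMod.val_add, Nat.mod_mod_of_dvd _ dvd_rfl]

lemma smul_val_add {T : Type*} [AddCommMonoid T] {n : ℕ} [NeZero n] (a b : ZMod n)
    (w : ℕ) {c : T} (h : n • c = 0) :
    (w * (a + b).val) • c = (w * a.val) • c + (w * b.val) • c := by
  rw [← add_nsmul, ← mul_add]
  refine nsmul_congr h (Nat.ModEq.mul_left w ?_)
  show (a + b).val % n = (a.val + b.val) % n
  rw [ZMod.val_add, Nat.mod_mod_of_dvd _ dvd_rfl]

section

variable {r : ℕ} (ℓ : ℕ) (α : Fin r → ℕ)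

lemma skew {A T : Type*} [AddCommGroup A] [AddCommGroup T] (f : A → A → T)
    (h1 : ∀ x y z, f (x + y) z = f x z + f y z)
    (h2 : ∀ x y z, f x (y + z) = f x y + f x z)
    (halt : ∀ x, f x x = 0) (x y : A) : f y x = - f x y := by
  have h := halt (x + y)
  rw [h1, h2 x x y, h2 y x y, halt x, halt y] at h
  have h' : f x y + f y x = 0 := by simpa using h
  exact eq_neg_of_add_eq_zero_left (by rwa [add_comm] at h')

def bundle {T : Type*} [AddCommGroup T]
    (f : (∀ i : Fin r, ZMod (ℓ ^ α i)) → (∀ i : Fin r, ZMod (ℓ ^ α i)) → T)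
    (h1 : ∀ x y z, f (x + y) z = f x z + f y z)
    (h2 : ∀ x y z, f x (y + z) = f x y + f x z) :
    (∀ i : Fin r, ZMod (ℓ ^ α i)) →+ ((∀ i : Fin r, ZMod (ℓ ^ α i)) →+ T) :=
  AddMonoidHom.mk' (fun x => AddMonoidHom.mk' (f x) (fun y z => h2 x y z))
    (fun x y => AddMonoidHom.ext fun z => h1 x y z)

lemma single_eq_smul (hℓ : 2 ≤ ℓ) (i : Fin r) (x : ZMod (ℓ ^ α i)) :
    Pi.single (M := fun i => ZMod (ℓ ^ α i)) i x
      = x.val • Pi.single (M := fun i => ZMod (ℓ ^ α i)) i 1 := by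
  haveI : ∀ j, NeZero (ℓ ^ α j) := fun j => ⟨pow_ne_zero _ (by omega)⟩
  rw [← Pi.single_smul]
  congr 1
  rw [nsmul_eq_mul, mul_one, ZMod.natCast_zmod_val]

lemma biadd_ext {T : Type*} [AddCommGroup T] (hℓ : 2 ≤ ℓ)
    (f g : (∀ i : Fin r, ZMod (ℓ ^ α i)) → (∀ i : Fin r, ZMod (ℓ ^ α i)) → T)
    (hf1 : ∀ x y z, f (x + y) z = f x z + f y z)
    (hf2 : ∀ x y z, f x (y + z) = f x y + f x z)
    (hg1 : ∀ x y z, g (x + y) z = g x z + g y z)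
    (hg2 : ∀ x y z, g x (y + z) = g x y + g x z)
    (H : ∀ i j, f (Pi.single i 1) (Pi.single j 1) = g (Pi.single i 1) (Pi.single j 1)) :
    f = g := by
  have key : bundle ℓ α f hf1 hf2 = bundle ℓ α g hg1 hg2 := by
    apply AddMonoidHom.functions_ext
    intro i x
    apply AddMonoidHom.functions_ext
    intro j y
    rw [single_eq_smul ℓ α hℓ i x, single_eq_smul ℓ α hℓ j y]
    rw [map_nsmul, map_nsmul]
    simp only [AddMonoidHom.nsmul_apply, map_nsmul]
    show y.val • x.val • f (Pi.single i 1) (Pi.single j 1)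
        = y.val • x.val • g (Pi.single i 1) (Pi.single j 1)
    rw [H]
  funext x y
  exact congrFun (congrArg (fun F => (F x : _ → T)) key) y

variable (hr : 0 < r)

/-- the basis vectors -/
def ev (i : Fin r) : ∀ j : Fin r, ZMod (ℓ ^ α j) := Pi.single i 1

/-- the value in `T` attached to a matrix entry -/
def cmat (m : ∀ p : {p : Fin r × Fin r // p.1 < p.2}, ZMod (ℓ ^ α p.1.2))
    (p : {p : Fin r × Fin r // p.1 < p.2}) : ZMod (ℓ ^ α ⟨0, hr⟩) :=
  ((ℓ ^ (α ⟨0, hr⟩ - α p.1.2) * (m p).val : ℕ) : ZMod (ℓ ^ α ⟨0, hr⟩))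

/-- the bilinear form attached to a strictly-upper-triangular matrix -/
def form (m : ∀ p : {p : Fin r × Fin r // p.1 < p.2}, ZMod (ℓ ^ α p.1.2))
    (x y : ∀ i : Fin r, ZMod (ℓ ^ α i)) : ZMod (ℓ ^ α ⟨0, hr⟩) :=
  ∑ p : {p : Fin r × Fin r // p.1 < p.2},
    (((x p.1.1).val * (y p.1.2).val) • cmat ℓ α hr m p
      - ((x p.1.2).val * (y p.1.1).val) • cmat ℓ α hr m p)

lemma kill_cmat (hanti : Antitone α) (m : ∀ p : {p : Fin r × Fin r // p.1 < p.2}, ZMod (ℓ ^ α p.1.2))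
    (p : {p : Fin r × Fin r // p.1 < p.2}) (i : Fin r) (hi : i ≤ p.1.2) :
    (ℓ ^ α i) • cmat ℓ α hr m p = 0 := by
  have h1 : α p.1.2 ≤ α i := hanti hi
  have h2 : α p.1.2 ≤ α ⟨0, hr⟩ := hanti (by simp [Fin.le_def])
  rw [cmat, nsmul_eq_mul, ← Nat.cast_mul, ZMod.natCast_eq_zero_iff]
  rw [← mul_assoc]
  refine Dvd.dvd.mul_right ?_ _
  have : ℓ ^ α ⟨0, hr⟩ ∣ ℓ ^ (α i + (α ⟨0, hr⟩ - α p.1.2)) := pow_dvd_pow ℓ (by omega)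
  rwa [pow_add] at this

lemma form_add_left (hℓ2 : 2 ≤ ℓ) (hanti : Antitone α)
    (m : ∀ p : {p : Fin r × Fin r // p.1 < p.2}, ZMod (ℓ ^ α p.1.2))
    (x x' y : ∀ i : Fin r, ZMod (ℓ ^ α i)) :
    form ℓ α hr m (x + x') y = form ℓ α hr m x y + form ℓ α hr m x' y := by
  haveI : ∀ j, NeZero (ℓ ^ α j) := fun j => ⟨pow_ne_zero _ (by omega)⟩
  rw [form, form, form, ← Finset.sum_add_distrib]
  refine Finset.sum_congr rfl fun p _ => ?_
  have k1 := kill_cmat ℓ α hr hanti m p p.1.1 (le_of_lt p.2)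
  have k2 := kill_cmat ℓ α hr hanti m p p.1.2 le_rfl
  simp only [Pi.add_apply]
  rw [val_add_smul (x p.1.1) (x' p.1.1) _ k1, val_add_smul (x p.1.2) (x' p.1.2) _ k2]
  abel

lemma form_add_right (hℓ2 : 2 ≤ ℓ) (hanti : Antitone α)
    (m : ∀ p : {p : Fin r × Fin r // p.1 < p.2}, ZMod (ℓ ^ α p.1.2))
    (x y y' : ∀ i : Fin r, ZMod (ℓ ^ α i)) :
    form ℓ α hr m x (y + y') = form ℓ α hr m x y + form ℓ α hr m x y' := by
  haveI : ∀ j, NeZero (ℓ ^ α j) := fun j => ⟨pow_ne_zero _ (by omega)⟩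
  rw [form, form, form, ← Finset.sum_add_distrib]
  refine Finset.sum_congr rfl fun p _ => ?_
  have k1 := kill_cmat ℓ α hr hanti m p p.1.1 (le_of_lt p.2)
  have k2 := kill_cmat ℓ α hr hanti m p p.1.2 le_rfl
  simp only [Pi.add_apply]
  rw [smul_val_add (y p.1.2) (y' p.1.2) _ k2, smul_val_add (y p.1.1) (y' p.1.1) _ k1]
  abel

lemma form_alt (m : ∀ p : {p : Fin r × Fin r // p.1 < p.2}, ZMod (ℓ ^ α p.1.2))
    (x : ∀ i : Fin r, ZMod (ℓ ^ α i)) : form ℓ α hr m x x = 0 := by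
  rw [form]
  refine Finset.sum_eq_zero fun p _ => ?_
  rw [mul_comm]
  exact sub_self _

lemma form_eval (hℓ2 : 2 ≤ ℓ) (hpos : ∀ i, 0 < α i)
    (m : ∀ p : {p : Fin r × Fin r // p.1 < p.2}, ZMod (ℓ ^ α p.1.2))
    (p : {p : Fin r × Fin r // p.1 < p.2}) :
    form ℓ α hr m (ev ℓ α p.1.1) (ev ℓ α p.1.2) = cmat ℓ α hr m p := by
  haveI : ∀ j, NeZero (ℓ ^ α j) := fun j => ⟨pow_ne_zero _ (by omega)⟩
  haveI : ∀ j, Fact (1 < ℓ ^ α j) := fun j => ⟨Nat.one_lt_pow (hpos j).ne' (by omega)⟩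
  rw [form, Finset.sum_eq_single p]
  · have h1 : p.1.2 ≠ p.1.1 := (ne_of_lt p.2).symm
    have h2 : p.1.1 ≠ p.1.2 := ne_of_lt p.2
    simp [ev, Pi.single_eq_same, Pi.single_eq_of_ne h1, Pi.single_eq_of_ne h2,
      ZMod.val_one]
  · intro q _ hq
    obtain ⟨⟨a, b⟩, hab⟩ := q
    simp only at hab ⊢
    by_cases ha : a = p.1.1
    · subst ha
      have hb : b ≠ p.1.2 := fun h => hq (Subtype.ext (Prod.ext rfl h))
      have hb1 := ne_of_gt hab
      simp [ev, Pi.single_eq_of_ne hb, Pi.single_eq_of_ne hb1]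
    · by_cases hb : b = p.1.1
      · have haj : a ≠ p.1.2 := ne_of_lt (lt_of_lt_of_le hab (le_of_eq hb) |>.trans p.2)
        simp [ev, Pi.single_eq_of_ne ha, Pi.single_eq_of_ne haj]
      · simp [ev, Pi.single_eq_of_ne ha, Pi.single_eq_of_ne hb]
  · exact fun h => absurd (Finset.mem_univ p) h

end

end CardAltFormsAux

open CardAltFormsAux

/-- The number of alternating bilinear forms on
`A = Z/ℓ^{α₁} ⊕ ⋯ ⊕ Z/ℓ^{α_r}` (with `α₁ ≥ ⋯ ≥ α_r > 0`), viewed as a module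
over `Z/ℓ^{α₁} = Z/exp(A)`, is `ℓ^{Σ_{i=2}^r (i-1)α_i}`.  Since all groups in
sight are `Z/ℓ^{α₁}`-modules, `Z/ℓ^{α₁}`-bilinearity is equivalent to
biadditivity. -/
theorem card_alternating_forms (ℓ : ℕ) (hℓ : ℓ.Prime) (r : ℕ) (hr : 0 < r)
    (α : Fin r → ℕ) (hanti : Antitone α) (hpos : ∀ i, 0 < α i) :
    Nat.card {f : (∀ i : Fin r, ZMod (ℓ ^ α i)) → (∀ i : Fin r, ZMod (ℓ ^ α i)) →
        ZMod (ℓ ^ α ⟨0, hr⟩) //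
      (∀ x y z, f (x + y) z = f x z + f y z) ∧
      (∀ x y z, f x (y + z) = f x y + f x z) ∧
      (∀ x, f x x = 0)}
    = ℓ ^ (∑ i : Fin r, (i : ℕ) * α i) := by
  classical
  haveI : ∀ j : Fin r, NeZero (ℓ ^ α j) := fun j => ⟨pow_ne_zero _ hℓ.pos.ne'⟩
  have hℓ2 : 2 ≤ ℓ := hℓ.two_le
  have hle : ∀ p : {p : Fin r × Fin r // p.1 < p.2}, α p.1.2 ≤ α ⟨0, hr⟩ :=
    fun p => hanti (by simp [Fin.le_def])
  let Φ : (∀ p : {p : Fin r × Fin r // p.1 < p.2}, ZMod (ℓ ^ α p.1.2)) →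
      {f : (∀ i : Fin r, ZMod (ℓ ^ α i)) → (∀ i : Fin r, ZMod (ℓ ^ α i)) →
        ZMod (ℓ ^ α ⟨0, hr⟩) //
      (∀ x y z, f (x + y) z = f x z + f y z) ∧
      (∀ x y z, f x (y + z) = f x y + f x z) ∧
      (∀ x, f x x = 0)} :=
    fun m => ⟨form ℓ α hr m,
      fun x y z' => form_add_left ℓ α hr hℓ2 hanti m x y z',
      fun x y z' => form_add_right ℓ α hr hℓ2 hanti m x y z',
      fun x => form_alt ℓ α hr m x⟩
  have hbij : Function.Bijective Φ := by
    constructor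
    · intro m m' h
      have hf : form ℓ α hr m = form ℓ α hr m' := congrArg Subtype.val h
      funext p
      have hev := form_eval ℓ α hr hℓ2 hpos m p
      rw [hf, form_eval ℓ α hr hℓ2 hpos m' p] at hev
      -- hev : cmat m' p = cmat m p
      have key : ∀ mm : ∀ p : {p : Fin r × Fin r // p.1 < p.2}, ZMod (ℓ ^ α p.1.2),
          (cmat ℓ α hr mm p).val = ℓ ^ (α ⟨0, hr⟩ - α p.1.2) * (mm p).val := by
        intro mm
        rw [cmat, ZMod.val_cast_of_lt]
        calc ℓ ^ (α ⟨0, hr⟩ - α p.1.2) * (mm p).val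
            < ℓ ^ (α ⟨0, hr⟩ - α p.1.2) * ℓ ^ α p.1.2 :=
              (mul_lt_mul_iff_right₀ (pow_pos (by omega) _)).mpr (ZMod.val_lt _)
          _ = ℓ ^ α ⟨0, hr⟩ := by rw [← pow_add]; congr 1; have := hle p; omega
      have hval : ℓ ^ (α ⟨0, hr⟩ - α p.1.2) * (m' p).val
          = ℓ ^ (α ⟨0, hr⟩ - α p.1.2) * (m p).val := by
        rw [← key m', ← key m, hev]
      have := Nat.eq_of_mul_eq_mul_left (pow_pos (by omega) _) hval
      exact (ZMod.val_injective _ this).symm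
    · rintro ⟨f, hf1, hf2, hfalt⟩
      have hkill : ∀ p : {p : Fin r × Fin r // p.1 < p.2},
          (ℓ ^ α p.1.2) • f (ev ℓ α p.1.1) (ev ℓ α p.1.2) = 0 := by
        intro p
        have h0 : (ℓ ^ α p.1.2 : ℕ) • (ev ℓ α p.1.2) = 0 := by
          funext k
          by_cases hk : k = p.1.2
          · subst hk
            simp [ev, ZMod.natCast_self]
          · simp [ev, Pi.single_eq_of_ne hk]
        have h2 := (bundle ℓ α f hf1 hf2 (ev ℓ α p.1.1)).map_nsmul
          (ℓ ^ α p.1.2) (ev ℓ α p.1.2)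
        rw [h0, map_zero] at h2
        exact h2.symm
      have hdvd : ∀ p : {p : Fin r × Fin r // p.1 < p.2},
          ℓ ^ (α ⟨0, hr⟩ - α p.1.2) ∣ (f (ev ℓ α p.1.1) (ev ℓ α p.1.2)).val := by
        intro p
        have hk := hkill p
        have hcast : ((ℓ ^ α p.1.2 * (f (ev ℓ α p.1.1) (ev ℓ α p.1.2)).val : ℕ)
            : ZMod (ℓ ^ α ⟨0, hr⟩)) = 0 := by
          rw [Nat.cast_mul, ZMod.natCast_zmod_val, ← nsmul_eq_mul]
          exact hk
        rw [ZMod.natCast_eq_zero_iff] at hcast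
        have heq : ℓ ^ α ⟨0, hr⟩ = ℓ ^ α p.1.2 * ℓ ^ (α ⟨0, hr⟩ - α p.1.2) := by
          rw [← pow_add]; congr 1; have := hle p; omega
        have hcast2 : ℓ ^ α p.1.2 * ℓ ^ (α ⟨0, hr⟩ - α p.1.2)
            ∣ ℓ ^ α p.1.2 * (f (ev ℓ α p.1.1) (ev ℓ α p.1.2)).val := by
          rw [← heq]; exact hcast
        exact (mul_dvd_mul_iff_left (pow_ne_zero _ (by omega : ℓ ≠ 0))).mp hcast2
      set m : ∀ p : {p : Fin r × Fin r // p.1 < p.2}, ZMod (ℓ ^ α p.1.2) :=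
        fun p => (((f (ev ℓ α p.1.1) (ev ℓ α p.1.2)).val / ℓ ^ (α ⟨0, hr⟩ - α p.1.2) : ℕ)
          : ZMod (ℓ ^ α p.1.2)) with hm
      have hc : ∀ p, cmat ℓ α hr m p = f (ev ℓ α p.1.1) (ev ℓ α p.1.2) := by
        intro p
        have heq : ℓ ^ α ⟨0, hr⟩ = ℓ ^ α p.1.2 * ℓ ^ (α ⟨0, hr⟩ - α p.1.2) := by
          rw [← pow_add]; congr 1; have := hle p; omega
        have htlt : (f (ev ℓ α p.1.1) (ev ℓ α p.1.2)).val / ℓ ^ (α ⟨0, hr⟩ - α p.1.2)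
            < ℓ ^ α p.1.2 := by
          rw [Nat.div_lt_iff_lt_mul (pow_pos (by omega) _)]
          calc (f (ev ℓ α p.1.1) (ev ℓ α p.1.2)).val < ℓ ^ α ⟨0, hr⟩ := ZMod.val_lt _
            _ = ℓ ^ α p.1.2 * ℓ ^ (α ⟨0, hr⟩ - α p.1.2) := heq
        have hmv : (m p).val
            = (f (ev ℓ α p.1.1) (ev ℓ α p.1.2)).val / ℓ ^ (α ⟨0, hr⟩ - α p.1.2) := by
          rw [hm]
          exact ZMod.val_cast_of_lt htlt
        rw [cmat, hmv, Nat.mul_div_cancel' (hdvd p), ZMod.natCast_zmod_val]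
      refine ⟨m, Subtype.ext ?_⟩
      show form ℓ α hr m = f
      refine biadd_ext ℓ α hℓ2 _ _
        (form_add_left ℓ α hr hℓ2 hanti m) (form_add_right ℓ α hr hℓ2 hanti m)
        hf1 hf2 ?_
      intro i j
      rcases lt_trichotomy i j with hij | hij | hij
      · exact (form_eval ℓ α hr hℓ2 hpos m ⟨(i, j), hij⟩).trans (hc ⟨(i, j), hij⟩)
      · subst hij
        rw [form_alt, hfalt]
      · have s1 := skew (form ℓ α hr m) (form_add_left ℓ α hr hℓ2 hanti m)
          (form_add_right ℓ α hr hℓ2 hanti m) (form_alt ℓ α hr m)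
          (Pi.single j 1) (Pi.single i 1)
        have s2 := skew f hf1 hf2 hfalt (Pi.single j 1) (Pi.single i 1)
        rw [s1, s2]
        have := (form_eval ℓ α hr hℓ2 hpos m ⟨(j, i), hij⟩).trans (hc ⟨(j, i), hij⟩)
        exact congrArg Neg.neg this
  rw [← Nat.card_eq_of_bijective Φ hbij, Nat.card_pi]
  rw [Finset.prod_congr rfl (fun p _ => Nat.card_zmod (ℓ ^ α p.1.2))]
  rw [Finset.prod_pow_eq_pow_sum]
  congr 1
  rw [← Finset.sum_subtype (Finset.univ.filter fun p : Fin r × Fin r => p.1 < p.2)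
    (by simp) (fun p => α p.2)]
  rw [Finset.sum_filter, Fintype.sum_prod_type, Finset.sum_comm]
  refine Finset.sum_congr rfl fun j _ => ?_
  show (∑ a : Fin r, if a < j then α j else 0) = ↑j * α j
  rw [← Finset.sum_filter, Finset.sum_const, smul_eq_mul]
  congr 1
  have : Finset.univ.filter (fun i : Fin r => i < j) = Finset.Iio j := by
    ext i; simp
  rw [this, Fin.card_Iio]
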